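/- Let G be a group and X ⊆ A^G a subshift such that the set of points with finite G-orbit is dense in X. Then Aut(X) is residually finite. -/

import Mathlib

/-- The (left) shift action on configurations: `(shift g x) h = x (g⁻¹ * h)`. -/
def shift {G A : Type*} [Group G] (g : G) (x : G → A) : G → A := fun h => x (g⁻¹ * h)

/-- A subshift: a closed, shift-invariant subset of the full shift `A^G`. -/
def IsSubshift {G A : Type*} [Group G] [TopologicalSpace A] (X : Set (G → A)) : Prop :=
  IsClosed X ∧ ∀ g : G, ∀ x ∈ X, shift g x ∈ X

/-- `X` is strongly irreducible with constant `K`: whenever `S * K ∩ T = ∅`, any two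
patterns of `X` with supports `S` and `T` can be jointly realized in `X`. -/
def StronglyIrreducible {G A : Type*} [Group G] (X : Set (G → A)) (K : Finset G) : Prop :=
  ∀ S T : Finset G, (∀ s ∈ S, ∀ k ∈ K, s * k ∉ T) →
    ∀ x ∈ X, ∀ y ∈ X, ∃ z ∈ X, (∀ g ∈ S, z g = x g) ∧ (∀ g ∈ T, z g = y g)

/-- The shift action on a shift-invariant subset, as a map `X → X`. -/
def shiftX {G A : Type*} [Group G] (X : Set (G → A))
    (hX : ∀ g : G, ∀ x ∈ X, shift g x ∈ X) (g : G) (x : X) : X :=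
  ⟨shift g (x : G → A), hX g x x.2⟩

/-- The automorphism group of a subshift `X`: shift-commuting self-homeomorphisms of `X`,
as a subgroup of the permutation group of `X`. -/
def Aut {G A : Type*} [Group G] [TopologicalSpace A] (X : Set (G → A))
    (hX : ∀ g : G, ∀ x ∈ X, shift g x ∈ X) : Subgroup (Equiv.Perm X) where
  carrier := {φ | Continuous φ ∧ Continuous φ.symm ∧
    ∀ (g : G) (x : X), φ (shiftX X hX g x) = shiftX X hX g (φ x)}
  one_mem' := by
    refine ⟨?_, ?_, fun g x => rfl⟩
    · simpa using continuous_id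
    · exact continuous_id
  mul_mem' := by
    rintro a b ⟨ha1, ha2, ha3⟩ ⟨hb1, hb2, hb3⟩
    refine ⟨?_, ?_, fun g x => ?_⟩
    · have : ⇑(a * b) = ⇑a ∘ ⇑b := rfl
      rw [this]; exact ha1.comp hb1
    · have : ⇑(a * b).symm = ⇑b.symm ∘ ⇑a.symm := rfl
      rw [this]; exact hb2.comp ha2
    · have h1 : (a * b) (shiftX X hX g x) = a (b (shiftX X hX g x)) := rfl
      have h2 : (a * b) x = a (b x) := rfl
      rw [h1, h2, hb3, ha3]
  inv_mem' := by
    rintro a ⟨h1, h2, h3⟩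
    refine ⟨?_, ?_, fun g x => ?_⟩
    · have : ⇑(a⁻¹) = ⇑a.symm := rfl
      rw [this]; exact h2
    · have : ⇑(a⁻¹).symm = ⇑a := rfl
      rw [this]; exact h1
    · apply a.injective
      rw [h3]; simp

/-- A group is residually finite if every non-identity element avoids some normal
subgroup of finite index. -/
def ResiduallyFinite (M : Type*) [Group M] : Prop :=
  ∀ m : M, m ≠ 1 → ∃ N : Subgroup M, N.Normal ∧ N.FiniteIndex ∧ m ∉ N

lemma shift_shift {G A : Type*} [Group G] (g g' : G) (x : G → A) :
    shift g (shift g' x) = shift (g * g') x := by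
  funext h; simp [shift, mul_assoc]

lemma shift_one' {G A : Type*} [Group G] (x : G → A) : shift (1:G) x = x := by
  funext h; simp [shift]

/-- if the points of `X` with finite orbit are dense in `X`, then `Aut(X)`
is residually finite. -/
theorem stmt8 {G A : Type*} [Group G] [Fintype A] [TopologicalSpace A] [DiscreteTopology A]
    (X : Set (G → A)) (hX : IsSubshift X)
    (hdense : ∀ x ∈ X, ∀ U : Set (G → A), IsOpen U → x ∈ U →
      ∃ y ∈ X ∩ U, (Set.range fun g : G => shift g y).Finite) :
    ResiduallyFinite (Aut X hX.2) := by
  intro phi hphi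
  -- find a point moved by phi
  have hex : ∃ x : X, (phi : Equiv.Perm X) x ≠ x := by
    by_contra h
    push_neg at h
    exact hphi (Subtype.ext (Equiv.ext h))
  obtain ⟨x, hx⟩ := hex
  have hxg : ∃ g₀ : G, (((phi : Equiv.Perm X) x : X) : G → A) g₀ ≠ ((x : X) : G → A) g₀ := by
    by_contra h
    push_neg at h
    exact hx (Subtype.ext (funext h))
  obtain ⟨g₀, hg₀⟩ := hxg
  obtain ⟨hc1, hc2, hc3⟩ := phi.2
  -- the open set where phi differs at g₀ in the same way
  set c : A := (((phi : Equiv.Perm X) x : X) : G → A) g₀ with hc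
  set d : A := ((x : X) : G → A) g₀ with hd
  have hm1 : Continuous fun z : X => (((phi : Equiv.Perm X) z : X) : G → A) g₀ :=
    (continuous_apply g₀).comp (continuous_subtype_val.comp hc1)
  have hm2 : Continuous fun z : X => ((z : X) : G → A) g₀ :=
    (continuous_apply g₀).comp continuous_subtype_val
  have hVopen : IsOpen {z : X | (((phi : Equiv.Perm X) z : X) : G → A) g₀ = c ∧
      ((z : X) : G → A) g₀ = d} := by
    have h1 : IsOpen ((fun z : X => (((phi : Equiv.Perm X) z : X) : G → A) g₀) ⁻¹' {c}) :=
      hm1.isOpen_preimage _ (isOpen_discrete _)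
    have h2 : IsOpen ((fun z : X => ((z : X) : G → A) g₀) ⁻¹' {d}) :=
      hm2.isOpen_preimage _ (isOpen_discrete _)
    exact h1.inter h2
  rw [isOpen_induced_iff] at hVopen
  obtain ⟨U, hUopen, hUeq⟩ := hVopen
  have hxU : (x : G → A) ∈ U := by
    have : x ∈ (Subtype.val ⁻¹' U : Set X) := by
      rw [hUeq]; exact ⟨rfl, rfl⟩
    exact this
  obtain ⟨y, ⟨hyX, hyU⟩, hyfin⟩ := hdense x x.2 U hUopen hxU
  set yX : X := ⟨y, hyX⟩ with hyXdef
  have hyV : (((phi : Equiv.Perm X) yX : X) : G → A) g₀ = c ∧ ((yX : X) : G → A) g₀ = d := by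
    have : yX ∈ (Subtype.val ⁻¹' U : Set X) := hyU
    rw [hUeq] at this
    exact this
  have hphiy : (phi : Equiv.Perm X) yX ≠ yX := by
    intro h
    apply hg₀
    calc c = (((phi : Equiv.Perm X) yX : X) : G → A) g₀ := hyV.1.symm
    _ = ((yX : X) : G → A) g₀ := by rw [h]
    _ = d := hyV.2
  -- the finite invariant set
  set F : Set X := {z : X | ∀ g : G, shift g y = y → shiftX X hX.2 g z = z} with hF
  have hyF : yX ∈ F := fun g hg => Subtype.ext hg
  have hinv : ∀ ψ : (Aut X hX.2), ∀ z ∈ F, (ψ : Equiv.Perm X) z ∈ F := by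
    intro ψ z hz g hg
    have h1 := ψ.2.2.2 g z
    rw [hz g hg] at h1
    exact h1.symm
  -- F is finite
  have hFfin : Finite F := by
    have hRfin : Finite (Set.range fun g : G => shift g y) := hyfin.to_subtype
    have hinj : Function.Injective
        (fun (z : F) (r : Set.range fun g : G => shift g y) =>
          ((z : X) : G → A) (Classical.choose r.2)⁻¹) := by
      intro z z' hzz
      ext h
      -- consider r = shift h⁻¹ y
      set r : (Set.range fun g : G => shift g y) := ⟨shift h⁻¹ y, ⟨h⁻¹, rfl⟩⟩ with hr
      have hg : shift (Classical.choose r.2) y = shift h⁻¹ y := Classical.choose_spec r.2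
      set g : G := Classical.choose r.2 with hgdef
      have hfix : shift (h * g) y = y := by
        have : shift h (shift g y) = shift h (shift h⁻¹ y) := by rw [hg]
        rwa [shift_shift, shift_shift, mul_inv_cancel, shift_one'] at this
      have key : ∀ w : F, ((w : X) : G → A) g⁻¹ = ((w : X) : G → A) h := by
        intro w
        have := w.2 (h * g) hfix
        have heq : shift (h * g) ((w : X) : G → A) = ((w : X) : G → A) :=
          congrArg Subtype.val this
        have := congrFun heq h
        simpa [shift, mul_assoc] using this
      have hval : ((z : X) : G → A) g⁻¹ = ((z' : X) : G → A) g⁻¹ := congrFun hzz r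
      calc ((z : X) : G → A) h = ((z : X) : G → A) g⁻¹ := (key z).symm
      _ = ((z' : X) : G → A) g⁻¹ := hval
      _ = ((z' : X) : G → A) h := key z'
    exact Finite.of_injective _ hinj
  -- the restriction homomorphism
  have hmemiff : ∀ ψ : (Aut X hX.2), ∀ z : X, z ∈ F ↔ (ψ : Equiv.Perm X) z ∈ F := by
    intro ψ z
    constructor
    · exact hinv ψ z
    · intro h
      have := hinv ψ⁻¹ _ h
      simpa using this
  let ρ : (Aut X hX.2) →* Equiv.Perm F :=
    { toFun := fun ψ => Equiv.Perm.subtypePerm (ψ : Equiv.Perm X) (fun z => (hmemiff ψ z).symm)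
      map_one' := Equiv.ext fun z => Subtype.ext rfl
      map_mul' := fun ψ₁ ψ₂ => Equiv.ext fun z => Subtype.ext rfl }
  have : Finite (Equiv.Perm F) := by infer_instance
  refine ⟨ρ.ker, MonoidHom.normal_ker ρ, Subgroup.finiteIndex_ker ρ, ?_⟩
  intro hker
  rw [MonoidHom.mem_ker] at hker
  have := congrArg (fun e : Equiv.Perm F => (e ⟨yX, hyF⟩ : X)) hker
  exact hphiy this
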